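/- Let z₁, z₂ > 0, s > 0, and define F_{z₁,z₂}(r) = arcosh(1 + (r² + (z₁ − z₂)²)/(2·z₁·z₂)). Then ∫_0^∞ √(2/π)·e^{−z²/2} · F_{z₁,z₂}(s·z) dz ≤ F_{z₁,z₂}(s). -/

import Mathlib

open Real MeasureTheory Filter Topology

/-- The inverse hyperbolic cosine. -/
noncomputable def arcosh (x : ℝ) : ℝ := Real.log (x + Real.sqrt (x ^ 2 - 1))

/-- The hyperbolic distance, in the Poincaré half-space model, between two points
with heights `z₁, z₂` whose horizontal coordinates are at Euclidean distance `r`. -/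
noncomputable def F (z₁ z₂ r : ℝ) : ℝ :=
  _root_.arcosh (1 + (r ^ 2 + (z₁ - z₂) ^ 2) / (2 * z₁ * z₂))

lemma arcosh_nonneg {x : ℝ} (hx : 1 ≤ x) : 0 ≤ _root_.arcosh x := by
  have h : (1:ℝ) ≤ x + Real.sqrt (x ^ 2 - 1) :=
    le_add_of_le_of_nonneg hx (Real.sqrt_nonneg _)
  simpa [_root_.arcosh] using Real.log_nonneg h

/-- Tangent-line bound for the concave function `arcosh` on `[1, ∞)`. -/
lemma arcosh_tangent {x y : ℝ} (hx : 1 ≤ x) (hy : 1 < y) :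
    _root_.arcosh x ≤ _root_.arcosh y + (x - y) / Real.sqrt (y ^ 2 - 1) := by
  set sx := Real.sqrt (x ^ 2 - 1) with hsx
  set sy := Real.sqrt (y ^ 2 - 1) with hsy
  have hsypos : 0 < sy := Real.sqrt_pos.mpr (by nlinarith)
  have hsxnn : 0 ≤ sx := Real.sqrt_nonneg _
  have hsx2 : sx ^ 2 = x ^ 2 - 1 := Real.sq_sqrt (by nlinarith)
  have hsy2 : sy ^ 2 = y ^ 2 - 1 := Real.sq_sqrt (by nlinarith)
  have hxy1 : (0:ℝ) ≤ x * y - 1 := by nlinarith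
  have hsq : (sx * sy) ^ 2 ≤ (x * y - 1) ^ 2 := by nlinarith [sq_nonneg (x - y)]
  have h1 : sx * sy ≤ x * y - 1 := by
    nlinarith [mul_nonneg hsxnn hsypos.le, hsq, hxy1]
  have h2 : (sx - sy) * sy ≤ y * (x - y) := by nlinarith
  have hupos : (0:ℝ) < x + sx := by linarith
  have hvpos : (0:ℝ) < y + sy := by linarith
  have hlog : Real.log (x + sx) ≤ Real.log (y + sy) + ((x + sx) - (y + sy)) / (y + sy) := by
    have h := Real.log_le_sub_one_of_pos (div_pos hupos hvpos)
    rw [Real.log_div hupos.ne' hvpos.ne'] at h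
    have e : (x + sx) / (y + sy) - 1 = ((x + sx) - (y + sy)) / (y + sy) := by
      field_simp
    rw [e] at h
    linarith
  have h3 : ((x + sx) - (y + sy)) / (y + sy) ≤ (x - y) / sy := by
    rw [div_le_div_iff₀ hvpos hsypos]
    nlinarith
  show Real.log (x + sx) ≤ Real.log (y + sy) + (x - y) / sy
  linarith

lemma exp_sq_form : ∀ z : ℝ, Real.exp (-z ^ 2 / 2) = Real.exp (-(1/2 * z ^ 2)) := by
  intro z; ring_nf

lemma intOn_exp : IntegrableOn (fun z : ℝ => Real.exp (-z ^ 2 / 2)) (Set.Ioi 0) := by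
  have h := (integrable_exp_neg_mul_sq (by norm_num : (0:ℝ) < 1/2)).integrableOn
    (s := Set.Ioi 0)
  refine h.congr_fun (fun z _ => ?_) measurableSet_Ioi
  rw [exp_sq_form]; ring_nf

lemma intOn_sq_exp : IntegrableOn (fun z : ℝ => z ^ 2 * Real.exp (-z ^ 2 / 2)) (Set.Ioi 0) := by
  have h := integrableOn_rpow_mul_exp_neg_mul_sq (by norm_num : (0:ℝ) < 1/2)
    (by norm_num : (-1:ℝ) < 2)
  refine h.congr_fun (fun z hz => ?_) measurableSet_Ioi
  beta_reduce
  rw [show (2:ℝ) = ((2:ℕ):ℝ) by norm_num, Real.rpow_natCast]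
  push_cast
  ring_nf

lemma gauss_A : ∫ z in Set.Ioi (0:ℝ), Real.exp (-z ^ 2 / 2) = Real.sqrt (π / 2) := by
  have h : ∫ z in Set.Ioi (0:ℝ), Real.exp (-z ^ 2 / 2) = Real.sqrt (π / (1/2)) / 2 := by
    rw [← integral_gaussian_Ioi (1/2)]
    refine setIntegral_congr_fun measurableSet_Ioi (fun z _ => ?_)
    rw [exp_sq_form]; ring_nf
  rw [h, show π / (1/2 : ℝ) = 2 ^ 2 * (π / 2) by ring,
    Real.sqrt_mul (by positivity), Real.sqrt_sq (by norm_num : (0:ℝ) ≤ 2)]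
  ring

lemma tendsto_mul_exp_top : Tendsto (fun z : ℝ => z * -Real.exp (-z ^ 2 / 2)) atTop (𝓝 0) := by
  have h0 : Tendsto (fun z : ℝ => z * Real.exp (-z ^ 2 / 2)) atTop (𝓝 0) := by
    have hg : Tendsto (fun z : ℝ => z ^ 1 * Real.exp (-z)) atTop (𝓝 0) :=
      tendsto_pow_mul_exp_neg_atTop_nhds_zero 1
    refine squeeze_zero' ?_ ?_ hg
    · filter_upwards [eventually_ge_atTop (0:ℝ)] with z hz
      positivity
    · filter_upwards [eventually_ge_atTop (2:ℝ)] with z hz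
      have : -z ^ 2 / 2 ≤ -z := by nlinarith
      have := Real.exp_le_exp.mpr this
      nlinarith [Real.exp_pos (-z ^ 2 / 2), Real.exp_pos (-z)]
  have := h0.neg
  simpa [neg_zero, mul_neg] using this

lemma gauss_B : ∫ z in Set.Ioi (0:ℝ), z ^ 2 * Real.exp (-z ^ 2 / 2) = Real.sqrt (π / 2) := by
  have hu : ∀ x ∈ Set.Ioi (0:ℝ), HasDerivAt (fun z : ℝ => z) 1 x := fun x _ => hasDerivAt_id x
  have hv : ∀ x ∈ Set.Ioi (0:ℝ), HasDerivAt (fun z : ℝ => -Real.exp (-z ^ 2 / 2))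
      (x * Real.exp (-x ^ 2 / 2)) x := by
    intro x _
    have h1 : HasDerivAt (fun z : ℝ => -z ^ 2 / 2) (-x) x := by
      have := ((hasDerivAt_pow 2 x).div_const 2).fun_neg
      simp only [neg_div] at *
      refine this.congr_deriv ?_
      push_cast
      ring
    have := (h1.exp).fun_neg
    refine this.congr_deriv ?_
    ring
  have huv' : IntegrableOn (fun z : ℝ => z * (z * Real.exp (-z ^ 2 / 2))) (Set.Ioi 0) := by
    refine intOn_sq_exp.congr_fun (fun z _ => ?_) measurableSet_Ioi
    ring
  have hneg : IntegrableOn (fun z : ℝ => -Real.exp (-z ^ 2 / 2)) (Set.Ioi 0) :=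
    intOn_exp.neg
  have hu'v : IntegrableOn (fun z : ℝ => (1:ℝ) * -Real.exp (-z ^ 2 / 2)) (Set.Ioi 0) := by
    refine hneg.congr_fun (fun z _ => ?_) measurableSet_Ioi
    ring
  have h_zero : Tendsto (fun z : ℝ => z * -Real.exp (-z ^ 2 / 2)) (nhdsWithin 0 (Set.Ioi 0))
      (𝓝 0) := by
    have hc : Continuous (fun z : ℝ => z * -Real.exp (-z ^ 2 / 2)) := by continuity
    have := (hc.tendsto 0).mono_left (nhdsWithin_le_nhds (s := Set.Ioi (0:ℝ)))
    simpa using this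
  have key := integral_Ioi_mul_deriv_eq_deriv_mul hu hv huv' hu'v h_zero tendsto_mul_exp_top
  rw [show (0:ℝ) - 0 = 0 by ring] at key
  have e1 : ∫ z in Set.Ioi (0:ℝ), z * (z * Real.exp (-z ^ 2 / 2)) =
      ∫ z in Set.Ioi (0:ℝ), z ^ 2 * Real.exp (-z ^ 2 / 2) :=
    setIntegral_congr_fun measurableSet_Ioi (fun z _ => by ring)
  have e2 : ∫ z in Set.Ioi (0:ℝ), (1:ℝ) * -Real.exp (-z ^ 2 / 2) =
      -∫ z in Set.Ioi (0:ℝ), Real.exp (-z ^ 2 / 2) := by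
    rw [← integral_neg]
    exact setIntegral_congr_fun measurableSet_Ioi (fun z _ => by ring)
  rw [e1, e2, gauss_A] at key
  linarith [key]

/-- Lemma 4.4: the expected projected hyperbolic distance is at most
`F_{z₁,z₂}(s)`. -/
theorem expected_projected_distance_upper_bound
    (z₁ z₂ s : ℝ) (hz₁ : 0 < z₁) (hz₂ : 0 < z₂) (hs : 0 < s) :
    ∫ z in Set.Ioi (0 : ℝ),
        Real.sqrt (2 / π) * Real.exp (-z ^ 2 / 2) * F z₁ z₂ (s * z) ≤
      F z₁ z₂ s := by
  have h2z : (0:ℝ) < 2 * z₁ * z₂ := by positivity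
  set y₀ : ℝ := 1 + (s ^ 2 + (z₁ - z₂) ^ 2) / (2 * z₁ * z₂) with hy₀def
  have hy₀ : 1 < y₀ := by
    have : 0 < (s ^ 2 + (z₁ - z₂) ^ 2) / (2 * z₁ * z₂) :=
      div_pos (by positivity) h2z
    simp only [hy₀def]; linarith
  set sy : ℝ := Real.sqrt (y₀ ^ 2 - 1) with hsydef
  have hsy : 0 < sy := Real.sqrt_pos.mpr (by nlinarith)
  set K : ℝ := s ^ 2 / (2 * z₁ * z₂) / sy with hKdef
  have hK : 0 < K := by positivity
  -- pointwise tangent bound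
  have hpt : ∀ z : ℝ, F z₁ z₂ (s * z) ≤ F z₁ z₂ s + K * (z ^ 2 - 1) := by
    intro z
    have hx : (1:ℝ) ≤ 1 + ((s * z) ^ 2 + (z₁ - z₂) ^ 2) / (2 * z₁ * z₂) := by
      have : 0 ≤ ((s * z) ^ 2 + (z₁ - z₂) ^ 2) / (2 * z₁ * z₂) :=
        div_nonneg (by positivity) h2z.le
      linarith
    have h := arcosh_tangent hx hy₀
    have e : (1 + ((s * z) ^ 2 + (z₁ - z₂) ^ 2) / (2 * z₁ * z₂) - y₀) / sy
        = K * (z ^ 2 - 1) := by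
      rw [hy₀def, hKdef]
      field_simp
      ring
    unfold F
    rw [← hsydef] at h
    rw [e] at h
    exact h
  have hFnn : ∀ z : ℝ, 0 ≤ F z₁ z₂ (s * z) := by
    intro z
    refine _root_.arcosh_nonneg ?_
    have : 0 ≤ ((s * z) ^ 2 + (z₁ - z₂) ^ 2) / (2 * z₁ * z₂) :=
      div_nonneg (by positivity) h2z.le
    linarith
  set c : ℝ := Real.sqrt (2 / π) with hcdef
  have hc : 0 < c := Real.sqrt_pos.mpr (by positivity)
  set g : ℝ → ℝ := fun z => c * Real.exp (-z ^ 2 / 2) * (F z₁ z₂ s + K * (z ^ 2 - 1))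
    with hgdef
  have hg_int : IntegrableOn g (Set.Ioi 0) := by
    have h1 : IntegrableOn (fun z : ℝ =>
        (c * (F z₁ z₂ s - K)) * Real.exp (-z ^ 2 / 2)) (Set.Ioi 0) :=
      intOn_exp.const_mul _
    have h2 : IntegrableOn (fun z : ℝ =>
        (c * K) * (z ^ 2 * Real.exp (-z ^ 2 / 2))) (Set.Ioi 0) :=
      intOn_sq_exp.const_mul _
    have h3 : IntegrableOn (fun z : ℝ =>
        (c * (F z₁ z₂ s - K)) * Real.exp (-z ^ 2 / 2)
          + (c * K) * (z ^ 2 * Real.exp (-z ^ 2 / 2))) (Set.Ioi 0) := h1.add h2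
    refine h3.congr_fun (fun z _ => ?_) measurableSet_Ioi
    simp only [hgdef]
    ring
  have hf_meas : AEStronglyMeasurable
      (fun z : ℝ => c * Real.exp (-z ^ 2 / 2) * F z₁ z₂ (s * z))
      (volume.restrict (Set.Ioi 0)) := by
    apply Measurable.aestronglyMeasurable
    unfold F _root_.arcosh
    have hcont : Continuous fun z : ℝ =>
        (1 + ((s * z) ^ 2 + (z₁ - z₂) ^ 2) / (2 * z₁ * z₂)) +
          Real.sqrt ((1 + ((s * z) ^ 2 + (z₁ - z₂) ^ 2) / (2 * z₁ * z₂)) ^ 2 - 1) := by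
      fun_prop
    have hexp : Continuous fun z : ℝ => c * Real.exp (-z ^ 2 / 2) := by fun_prop
    exact hexp.measurable.mul (Real.measurable_log.comp hcont.measurable)
  have hf_int : IntegrableOn
      (fun z : ℝ => c * Real.exp (-z ^ 2 / 2) * F z₁ z₂ (s * z)) (Set.Ioi 0) := by
    refine hg_int.mono' hf_meas ?_
    refine ae_of_all _ (fun z => ?_)
    have h1 : 0 ≤ c * Real.exp (-z ^ 2 / 2) * F z₁ z₂ (s * z) := by
      have := hFnn z
      positivity
    rw [Real.norm_eq_abs, abs_of_nonneg h1]
    have hpre : 0 ≤ c * Real.exp (-z ^ 2 / 2) := by positivity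
    simp only [hgdef]
    exact mul_le_mul_of_nonneg_left (hpt z) hpre
  have hmono : ∫ z in Set.Ioi (0:ℝ),
      c * Real.exp (-z ^ 2 / 2) * F z₁ z₂ (s * z) ≤ ∫ z in Set.Ioi (0:ℝ), g z := by
    refine setIntegral_mono_on hf_int hg_int measurableSet_Ioi (fun z _ => ?_)
    have hpre : 0 ≤ c * Real.exp (-z ^ 2 / 2) := by positivity
    simp only [hgdef]
    exact mul_le_mul_of_nonneg_left (hpt z) hpre
  have hgval : ∫ z in Set.Ioi (0:ℝ), g z = F z₁ z₂ s := by
    have e : ∀ z : ℝ, g z = (c * (F z₁ z₂ s - K)) * Real.exp (-z ^ 2 / 2)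
        + (c * K) * (z ^ 2 * Real.exp (-z ^ 2 / 2)) := by
      intro z; simp only [hgdef]; ring
    rw [setIntegral_congr_fun measurableSet_Ioi (fun z _ => e z),
      integral_add (intOn_exp.const_mul _) (intOn_sq_exp.const_mul _),
      integral_const_mul, integral_const_mul, gauss_A, gauss_B]
    have hprod : c * Real.sqrt (π / 2) = 1 := by
      rw [hcdef, ← Real.sqrt_mul (by positivity)]
      rw [show (2 / π) * (π / 2) = 1 by field_simp]
      exact Real.sqrt_one
    linear_combination (F z₁ z₂ s) * hprod
  calc ∫ z in Set.Ioi (0:ℝ), c * Real.exp (-z ^ 2 / 2) * F z₁ z₂ (s * z)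
      ≤ ∫ z in Set.Ioi (0:ℝ), g z := hmono
    _ = F z₁ z₂ s := hgval
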